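/- arXiv:1701.06960 — 4 statements merged into one kernel-verified Lean document; each statement's English description precedes it below -/
import Mathlib

section
/- Let K ≥ 1 and d ≥ 1 be integers, let c_1,…,c_K be nonnegative reals, and let R_{i,j} ≥ 0 be given for i = 1,…,K and max(1, i−d+1) ≤ j ≤ i. Define r_{ij} = Σ_{k=j}^{i} Σ_{l=k}^{min(k+d−1,K)} R_{l,k} for 1 ≤ j ≤ i ≤ K. If Σ_{j=max(1,i−d+1)}^{i} R_{i,j} ≤ c_i for every i = 1,…,K, then: (a) r_{ij} = Σ_{k=j}^{i} r_{kk} for all 1 ≤ j < i ≤ K; (b) r_{ij} ≤ Σ_{k=j}^{min(i+d−1,K)} c_k for all 1 ≤ j ≤ i ≤ K; and (c) r_{ij} ≥ 0 for all 1 ≤ j ≤ i ≤ K. (Direct part of Proposition 1: the individual-rate constraint system implies the cumulative-rate constraint system.) -/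
open Finset Real

/-- Direct part of Proposition 1: the individual-rate constraint system implies
the cumulative-rate constraint system. -/
theorem stmt_0 (K d : ℕ) (hK : 1 ≤ K) (hd : 1 ≤ d)
    (c : ℕ → ℝ) (hc : ∀ i, 1 ≤ i → i ≤ K → 0 ≤ c i)
    (R : ℕ → ℕ → ℝ)
    (hR : ∀ i j, 1 ≤ i → i ≤ K → max 1 (i + 1 - d) ≤ j → j ≤ i → 0 ≤ R i j)
    (r : ℕ → ℕ → ℝ)
    (hr : ∀ i j, 1 ≤ j → j ≤ i → i ≤ K →
      r i j = ∑ k ∈ Finset.Icc j i, ∑ l ∈ Finset.Icc k (min (k + d - 1) K), R l k)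
    (hcap : ∀ i, 1 ≤ i → i ≤ K →
      ∑ j ∈ Finset.Icc (max 1 (i + 1 - d)) i, R i j ≤ c i) :
    (∀ i j, 1 ≤ j → j < i → i ≤ K → r i j = ∑ k ∈ Finset.Icc j i, r k k) ∧
    (∀ i j, 1 ≤ j → j ≤ i → i ≤ K →
      r i j ≤ ∑ k ∈ Finset.Icc j (min (i + d - 1) K), c k) ∧
    (∀ i j, 1 ≤ j → j ≤ i → i ≤ K → 0 ≤ r i j) := by
  refine ⟨?_, ?_, ?_⟩
  · intro i j hj hji hiK
    rw [hr i j hj hji.le hiK]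
    refine Finset.sum_congr rfl fun k hk => ?_
    simp only [Finset.mem_Icc] at hk
    rw [hr k k (hj.trans hk.1) le_rfl (hk.2.trans hiK), Finset.Icc_self,
      Finset.sum_singleton]
  · intro i j hj hji hiK
    rw [hr i j hj hji hiK]
    have key : ∀ k ∈ Finset.Icc j i,
        ∑ l ∈ Finset.Icc k (min (k + d - 1) K), R l k
        = ∑ l ∈ Finset.Icc j (min (i + d - 1) K),
            if k ≤ l ∧ l ≤ k + d - 1 then R l k else 0 := by
      intro k hk
      simp only [Finset.mem_Icc] at hk
      rw [← Finset.sum_filter]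
      congr 1
      ext l
      simp only [Finset.mem_filter, Finset.mem_Icc]
      omega
    rw [Finset.sum_congr rfl key, Finset.sum_comm]
    refine Finset.sum_le_sum fun l hl => ?_
    simp only [Finset.mem_Icc] at hl
    calc ∑ k ∈ Finset.Icc j i, (if k ≤ l ∧ l ≤ k + d - 1 then R l k else 0)
        ≤ ∑ k ∈ Finset.Icc (max 1 (l + 1 - d)) l, R l k := by
          rw [← Finset.sum_filter]
          refine Finset.sum_le_sum_of_subset_of_nonneg ?_ fun k hk _ => ?_
          · intro k hk
            simp only [Finset.mem_filter, Finset.mem_Icc] at hk ⊢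
            omega
          · simp only [Finset.mem_Icc] at hk
            exact hR l k (by omega) (by omega) (by omega) (by omega)
      _ ≤ c l := hcap l (by omega) (by omega)
  · intro i j hj hji hiK
    rw [hr i j hj hji hiK]
    refine Finset.sum_nonneg fun k hk => Finset.sum_nonneg fun l hl => ?_
    simp only [Finset.mem_Icc] at hk hl
    exact hR l k (by omega) (by omega) (by omega) (by omega)
end

section
/- Let K ≥ 1 and d ≥ 1 be integers, and let c_1,…,c_K ≥ 0 and r_{11},…,r_{KK} ≥ 0 be reals satisfying the interval constraints Σ_{k=j}^{i} r_{kk} ≤ Σ_{k=j}^{min(i+d−1,K)} c_k for all pairs 1 ≤ j ≤ i ≤ K. Then there exist nonnegative reals R_{i,j}, for i = 1,…,K and max(1, i−d+1) ≤ j ≤ i, such that Σ_{l=i}^{min(i+d−1,K)} R_{l,i} = r_{ii} for every i = 1,…,K and Σ_{j=max(1,i−d+1)}^{i} R_{i,j} ≤ c_i for every i = 1,…,K. (Converse part of Proposition 1: the cumulative-rate constraint system admits a realization by individual rates.) -/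
open Finset Real

/-- Cumulative demand. -/
def Dd (r : ℕ → ℝ) (j : ℕ) : ℝ := ∑ k ∈ Finset.Icc 1 j, r k

/-- Cumulative service (FIFO fluid schedule). -/
def Tt (r c : ℕ → ℝ) : ℕ → ℝ
  | 0 => 0
  | n + 1 => min (Dd r (n + 1)) (Tt r c n + c (n + 1))

lemma clamp_lemma (a b lo hi : ℝ) (hab : a ≤ b) (hlh : lo ≤ hi) :
    max 0 (min b hi - max a lo) = min (max b lo) hi - min (max a lo) hi := by
  simp only [min_def, max_def]
  split_ifs <;> linarith

lemma telescope (f : ℕ → ℝ) : ∀ i a, 1 ≤ a → a ≤ i + 1 →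
    ∑ j ∈ Finset.Icc a i, (f j - f (j - 1)) = f i - f (a - 1) := by
  intro i
  induction i with
  | zero =>
    intro a h1 h2
    interval_cases a
    simp
  | succ n ih =>
    intro a h1 h2
    rcases Nat.lt_or_ge (n + 1) a with h | h
    · have : a = n + 2 := by omega
      subst this
      rw [Finset.Icc_eq_empty (by omega)]
      simp
    · rw [Finset.sum_Icc_succ_top h, ih a h1 (by omega)]
      simp only [Nat.add_sub_cancel]
      ring

/-- Lower bound on the cumulative service. -/
lemma Tlb (r c : ℕ → ℝ) : ∀ t, ∀ x : ℝ,
    (∀ s, s ≤ t → x ≤ Dd r s + ∑ k ∈ Finset.Icc (s + 1) t, c k) → x ≤ Tt r c t := by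
  intro t
  induction t with
  | zero =>
    intro x hx
    have := hx 0 le_rfl
    simpa [Dd, Tt] using this
  | succ n ih =>
    intro x hx
    rw [Tt]
    refine le_min ?_ ?_
    · have := hx (n + 1) le_rfl
      simpa [Finset.Icc_eq_empty (by omega : ¬ (n + 2 ≤ n + 1))] using this
    · have : x - c (n + 1) ≤ Tt r c n := by
        apply ih
        intro s hs
        have h1 := hx s (by omega)
        rw [Finset.sum_Icc_succ_top (by omega : s + 1 ≤ n + 1)] at h1
        linarith
      linarith

/-- Converse part of Proposition 1: the cumulative-rate constraint system admits
a realization by individual rates. -/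
theorem stmt_1 (K d : ℕ) (hK : 1 ≤ K) (hd : 1 ≤ d)
    (c : ℕ → ℝ) (hc : ∀ i, 1 ≤ i → i ≤ K → 0 ≤ c i)
    (rdiag : ℕ → ℝ) (hrdiag : ∀ i, 1 ≤ i → i ≤ K → 0 ≤ rdiag i)
    (hineq : ∀ i j, 1 ≤ j → j ≤ i → i ≤ K →
      ∑ k ∈ Finset.Icc j i, rdiag k ≤ ∑ k ∈ Finset.Icc j (min (i + d - 1) K), c k) :
    ∃ R : ℕ → ℕ → ℝ,
      (∀ i j, 1 ≤ i → i ≤ K → max 1 (i + 1 - d) ≤ j → j ≤ i → 0 ≤ R i j) ∧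
      (∀ i, 1 ≤ i → i ≤ K →
        ∑ l ∈ Finset.Icc i (min (i + d - 1) K), R l i = rdiag i) ∧
      (∀ i, 1 ≤ i → i ≤ K →
        ∑ j ∈ Finset.Icc (max 1 (i + 1 - d)) i, R i j ≤ c i) := by
  set D : ℕ → ℝ := Dd rdiag with hDdef
  set T : ℕ → ℝ := Tt rdiag c with hTdef
  have hD0 : D 0 = 0 := by simp [hDdef, Dd]
  have hT0 : T 0 = 0 := by simp [hTdef, Tt]
  -- D is monotone up to K
  have hDmono : ∀ a b, a ≤ b → b ≤ K → D a ≤ D b := by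
    intro a b hab hbK
    apply Finset.sum_le_sum_of_subset_of_nonneg
    · exact Finset.Icc_subset_Icc le_rfl hab
    · intro k hk _
      simp only [Finset.mem_Icc] at hk
      exact hrdiag k hk.1 (le_trans hk.2 hbK)
  -- T l ≤ D l
  have hTleD : ∀ l, T l ≤ D l := by
    intro l
    cases l with
    | zero => rw [hT0, hD0]
    | succ n => exact min_le_left _ _
  -- T is monotone (step) up to K
  have hTstep : ∀ l, l + 1 ≤ K → T l ≤ T (l + 1) := by
    intro l hl
    show T l ≤ min (Dd rdiag (l + 1)) (Tt rdiag c l + c (l + 1))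
    refine le_min ?_ ?_
    · exact le_trans (hTleD l) (hDmono l (l + 1) (by omega) hl)
    · have := hc (l + 1) (by omega) hl
      rw [hTdef]
      linarith
  have hTmono : ∀ a b, a ≤ b → b ≤ K → T a ≤ T b := by
    intro a b hab hbK
    induction b with
    | zero => interval_cases a; rfl
    | succ n ih =>
      rcases Nat.lt_or_ge n a with h | h
      · have : a = n + 1 := by omega
        subst this; rfl
      · exact le_trans (ih h (by omega)) (hTstep n hbK)
  -- T l ≤ T (l-1) + c l for l ≥ 1
  have hTcap : ∀ m : ℕ, T (m + 1) ≤ T m + c (m + 1) := by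
    intro m
    exact min_le_right _ _
  -- splitting D
  have hDsplit : ∀ s j, s ≤ j → D j = D s + ∑ k ∈ Finset.Icc (s + 1) j, rdiag k := by
    intro s j hsj
    have h := Finset.sum_Ioc_consecutive rdiag (Nat.zero_le s) hsj
    simp only [← Finset.Icc_add_one_left_eq_Ioc, Nat.succ_eq_add_one, Nat.zero_add] at h
    show Dd rdiag j = Dd rdiag s + _
    unfold Dd
    linarith
  -- the key deadline property
  have hstar : ∀ j, 1 ≤ j → j ≤ K → D j ≤ T (min (j + d - 1) K) := by
    intro j h1 hjK
    rw [hTdef]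
    apply Tlb
    intro s hs
    rcases Nat.lt_or_ge s j with h | h
    · have hsj : s ≤ j := by omega
      have := hineq j (s + 1) (by omega) (by omega) hjK
      rw [hDsplit s j hsj]
      have h3 : Finset.Icc (s + 1) (min (j + d - 1) K) = Finset.Icc (s + 1) (min (j + d - 1) K) := rfl
      rw [← hDdef]
      linarith
    · have hsK : s ≤ K := le_trans hs (min_le_right _ _)
      have : D j ≤ D s := hDmono j s h hsK
      have hsum : 0 ≤ ∑ k ∈ Finset.Icc (s + 1) (min (j + d - 1) K), c k := by
        apply Finset.sum_nonneg
        intro k hk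
        simp only [Finset.mem_Icc] at hk
        exact hc k (by omega) (le_trans hk.2 (min_le_right _ _))
      rw [← hDdef] at *
      linarith
  -- the construction
  refine ⟨fun i j => max 0 (min (D j) (T i) - max (D (j - 1)) (T (i - 1))), ?_, ?_, ?_⟩
  · intro i j _ _ _ _
    exact le_max_left _ _
  · -- source sums
    intro i h1 hiK
    set t := min (i + d - 1) K with ht
    have hit : i ≤ t := by omega
    have htK : t ≤ K := by omega
    have hstep : ∀ l ∈ Finset.Icc i t,
        max 0 (min (D i) (T l) - max (D (i - 1)) (T (l - 1)))
          = (fun l => min (max (T l) (D (i - 1))) (D i)) l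
            - (fun l => min (max (T l) (D (i - 1))) (D i)) (l - 1) := by
      intro l hl
      simp only [Finset.mem_Icc] at hl
      have hl1 : 1 ≤ l := le_trans h1 hl.1
      obtain ⟨m, rfl⟩ := Nat.exists_eq_add_of_le hl1
      have hab : T (1 + m - 1) ≤ T (1 + m) := by
        have : 1 + m - 1 = m := by omega
        rw [this]
        have := hTstep m (by omega)
        simpa [Nat.add_comm] using this
      have hlh : D (i - 1) ≤ D i := hDmono (i - 1) i (by omega) hiK
      rw [min_comm (D i) (T (1 + m)), max_comm (D (i - 1)) (T (1 + m - 1))]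
      exact clamp_lemma _ _ _ _ hab hlh
    rw [Finset.sum_congr rfl hstep,
      telescope (fun l => min (max (T l) (D (i - 1))) (D i)) t i h1 (by omega)]
    have hDi : D i = D (i - 1) + rdiag i := by
      have := hDsplit (i - 1) i (by omega)
      have h2 : Finset.Icc (i - 1 + 1) i = {i} := by
        rw [(by omega : i - 1 + 1 = i)]
        exact Finset.Icc_self i
      rw [this, h2, Finset.sum_singleton]
    have hft : min (max (T t) (D (i - 1))) (D i) = D i := by
      have h2 : D i ≤ T t := hstar i h1 hiK
      have : D i ≤ max (T t) (D (i - 1)) := le_trans h2 (le_max_left _ _)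
      rw [min_eq_right this]
    have hfi : min (max (T (i - 1)) (D (i - 1))) (D i) = D (i - 1) := by
      have h2 : T (i - 1) ≤ D (i - 1) := hTleD (i - 1)
      rw [max_eq_right h2, min_eq_left (hDmono (i - 1) i (by omega) hiK)]
    rw [hft, hfi]
    linarith
  · -- slot sums
    intro i h1 hiK
    set a := max 1 (i + 1 - d) with ha
    have hai : a ≤ i := by omega
    obtain ⟨m, rfl⟩ := Nat.exists_eq_add_of_le h1
    have hTi : T (1 + m - 1) ≤ T (1 + m) := by
      have : 1 + m - 1 = m := by omega
      rw [this]
      have := hTstep m (by omega)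
      simpa [Nat.add_comm] using this
    have hstep : ∀ j ∈ Finset.Icc a (1 + m),
        max 0 (min (D j) (T (1 + m)) - max (D (j - 1)) (T (1 + m - 1)))
          = (fun j => min (max (D j) (T (1 + m - 1))) (T (1 + m))) j
            - (fun j => min (max (D j) (T (1 + m - 1))) (T (1 + m))) (j - 1) := by
      intro j hj
      simp only [Finset.mem_Icc] at hj
      have hj1 : 1 ≤ j := le_trans (le_max_left _ _) hj.1
      have hab : D (j - 1) ≤ D j := hDmono (j - 1) j (by omega) (le_trans hj.2 hiK)
      exact clamp_lemma _ _ _ _ hab hTi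
    rw [Finset.sum_congr rfl hstep,
      telescope (fun j => min (max (D j) (T (1 + m - 1))) (T (1 + m))) (1 + m) a
        (le_max_left _ _) (by omega)]
    have hub : min (max (D (1 + m)) (T (1 + m - 1))) (T (1 + m)) ≤ T (1 + m) :=
      min_le_right _ _
    have hlb : T (1 + m - 1) ≤ min (max (D (a - 1)) (T (1 + m - 1))) (T (1 + m)) :=
      le_min (le_max_right _ _) hTi
    have hcap : T (1 + m) ≤ T (1 + m - 1) + c (1 + m) := by
      have : 1 + m - 1 = m := by omega
      rw [this]
      have := hTcap m
      simpa [Nat.add_comm] using this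
    linarith
end

section
/- Let K ≥ 1 and d ≥ 1 be integers, and let c_1,…,c_K ≥ 0 and r_{11},…,r_{KK} ≥ 0 be reals satisfying the interval constraints Σ_{k=j}^{i} r_{kk} ≤ Σ_{k=j}^{min(i+d−1,K)} c_k for all pairs 1 ≤ j ≤ i ≤ K, together with the total-balance condition Σ_{i=1}^{K} r_{ii} = Σ_{i=1}^{K} c_i. Then there exist nonnegative reals R_{i,j}, for i = 1,…,K and max(1, i−d+1) ≤ j ≤ i, such that Σ_{l=i}^{min(i+d−1,K)} R_{l,i} = r_{ii} for every i = 1,…,K and (with equality in every capacity constraint) Σ_{j=max(1,i−d+1)}^{i} R_{i,j} = c_i for every i = 1,…,K. (Feasibility of the equality system used in the Farkas-lemma argument of the proof of Proposition 1.) -/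
open Finset Real

private lemma tele_aux (f : ℕ → ℝ) (m : ℕ) :
    ∀ l, m ≤ l → ∑ j ∈ Finset.Icc m l, (f j - f (j-1)) = f l - f (m-1) := by
  intro l
  induction l with
  | zero =>
      intro h
      have : m = 0 := by omega
      subst this
      simp
  | succ n ih =>
      intro h
      rcases Nat.lt_or_ge m (n+1) with h1 | h1
      · rw [Finset.sum_Icc_succ_top (by omega : m ≤ n+1), ih (by omega)]
        simp only [Nat.add_sub_cancel]
        ring
      · have : m = n+1 := by omega
        subst this
        simp

private lemma min_mono_sub {a b x y : ℝ} (hba : b ≤ a) (hxy : x ≤ y) :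
    min a x - min b x ≤ min a y - min b y := by
  rcases le_total x b with h | h
  · rw [min_eq_right (le_trans h hba), min_eq_right h]
    have : min b y ≤ min a y := min_le_min hba le_rfl
    linarith
  · rw [min_eq_left h, min_eq_left (le_trans h hxy)]
    have : min a x ≤ min a y := min_le_min le_rfl hxy
    linarith

/-- Feasibility of the equality system used in the Farkas-lemma argument of the
proof of Proposition 1. -/
theorem stmt_2 (K d : ℕ) (hK : 1 ≤ K) (hd : 1 ≤ d)
    (c : ℕ → ℝ) (hc : ∀ i, 1 ≤ i → i ≤ K → 0 ≤ c i)
    (rdiag : ℕ → ℝ) (hrdiag : ∀ i, 1 ≤ i → i ≤ K → 0 ≤ rdiag i)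
    (hineq : ∀ i j, 1 ≤ j → j ≤ i → i ≤ K →
      ∑ k ∈ Finset.Icc j i, rdiag k ≤ ∑ k ∈ Finset.Icc j (min (i + d - 1) K), c k)
    (hbal : ∑ i ∈ Finset.Icc 1 K, rdiag i = ∑ i ∈ Finset.Icc 1 K, c i) :
    ∃ R : ℕ → ℕ → ℝ,
      (∀ i j, 1 ≤ i → i ≤ K → max 1 (i + 1 - d) ≤ j → j ≤ i → 0 ≤ R i j) ∧
      (∀ i, 1 ≤ i → i ≤ K →
        ∑ l ∈ Finset.Icc i (min (i + d - 1) K), R l i = rdiag i) ∧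
      (∀ i, 1 ≤ i → i ≤ K →
        ∑ j ∈ Finset.Icc (max 1 (i + 1 - d)) i, R i j = c i) := by
  classical
  set S : ℕ → ℝ := fun n => ∑ k ∈ Finset.Icc 1 n, rdiag k with hS
  set C : ℕ → ℝ := fun n => ∑ k ∈ Finset.Icc 1 n, c k with hC
  have hIcc : ∀ n : ℕ, Finset.Icc 1 n = Finset.Ioc 0 n := by
    intro n; rw [← Finset.Icc_add_one_left_eq_Ioc]; rfl
  -- splitting lemmas
  have Ssplit : ∀ p q : ℕ, p ≤ q →
      S q = S p + ∑ k ∈ Finset.Ioc p q, rdiag k := by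
    intro p q hpq
    have := Finset.sum_Ioc_consecutive rdiag (Nat.zero_le p) hpq
    simp only [hS, hIcc]
    linarith
  have Csplit : ∀ p q : ℕ, p ≤ q →
      C q = C p + ∑ k ∈ Finset.Ioc p q, c k := by
    intro p q hpq
    have := Finset.sum_Ioc_consecutive c (Nat.zero_le p) hpq
    simp only [hC, hIcc]
    linarith
  have Smono : ∀ p q : ℕ, p ≤ q → q ≤ K → S p ≤ S q := by
    intro p q hpq hqK
    rw [Ssplit p q hpq]
    have : (0:ℝ) ≤ ∑ k ∈ Finset.Ioc p q, rdiag k := by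
      apply Finset.sum_nonneg
      intro k hk
      rw [Finset.mem_Ioc] at hk
      exact hrdiag k (by omega) (by omega)
    linarith
  have Cmono : ∀ p q : ℕ, p ≤ q → q ≤ K → C p ≤ C q := by
    intro p q hpq hqK
    rw [Csplit p q hpq]
    have : (0:ℝ) ≤ ∑ k ∈ Finset.Ioc p q, c k := by
      apply Finset.sum_nonneg
      intro k hk
      rw [Finset.mem_Ioc] at hk
      exact hc k (by omega) (by omega)
    linarith
  have Cnn : ∀ n : ℕ, n ≤ K → 0 ≤ C n := by
    intro n hn
    have : C 0 = 0 := by simp [hC]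
    have := Cmono 0 n (Nat.zero_le n) hn
    linarith
  have S0 : S 0 = 0 := by simp [hS]
  -- C j ≤ S j for j ≤ K
  have CS : ∀ j : ℕ, j ≤ K → C j ≤ S j := by
    intro j hj
    rcases Nat.lt_or_ge j K with hjK | hjK
    · have h1 := hineq K (j+1) (by omega) (by omega) (le_refl K)
      have hmin : min (K + d - 1) K = K := by omega
      rw [hmin] at h1
      have h2 : ∀ (f : ℕ → ℝ), Finset.Icc (j+1) K = Finset.Ioc j K := by
        intro f; rw [← Finset.Icc_add_one_left_eq_Ioc]
      rw [h2 rdiag] at h1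
      have e1 := Ssplit j K (by omega)
      have e2 := Csplit j K (by omega)
      have hbal' : S K = C K := hbal
      linarith
    · have : j = K := by omega
      subst this
      exact le_of_eq hbal.symm
  -- S i ≤ C (min (i+d-1) K) for 1 ≤ i ≤ K
  have SC : ∀ i : ℕ, 1 ≤ i → i ≤ K → S i ≤ C (min (i + d - 1) K) := by
    intro i h1 h2
    exact hineq i 1 le_rfl h1 h2
  -- step lemmas
  have Cstep : ∀ l : ℕ, 1 ≤ l → C l = C (l-1) + c l := by
    intro l hl
    have := Csplit (l-1) l (by omega)
    have : Finset.Ioc (l-1) l = {l} := by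
      rw [show l = (l-1)+1 by omega]
      simp [Nat.Ioc_succ_singleton]
    rw [Csplit (l-1) l (by omega), this]
    simp
  have Sstep : ∀ l : ℕ, 1 ≤ l → S l = S (l-1) + rdiag l := by
    intro l hl
    have : Finset.Ioc (l-1) l = {l} := by
      rw [show l = (l-1)+1 by omega]
      simp [Nat.Ioc_succ_singleton]
    rw [Ssplit (l-1) l (by omega), this]
    simp
  -- key fact for column sums: sources before the window are already served
  have window : ∀ l : ℕ, 1 ≤ l → l ≤ K → S (max 1 (l + 1 - d) - 1) ≤ C (l - 1) := by
    intro l h1 h2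
    rcases le_or_gt l d with hld | hld
    · have : max 1 (l + 1 - d) - 1 = 0 := by omega
      rw [this, S0]
      exact Cnn (l-1) (by omega)
    · have hm : max 1 (l + 1 - d) - 1 = l - d := by omega
      rw [hm]
      have h3 := hineq (l - d) 1 le_rfl (by omega) (by omega)
      have hmin : min (l - d + d - 1) K = l - 1 := by omega
      rw [hmin] at h3
      exact h3
  -- the construction
  refine ⟨fun l j => (min (C l) (S j) - min (C (l-1)) (S j)) -
      (min (C l) (S (j-1)) - min (C (l-1)) (S (j-1))), ?_, ?_, ?_⟩
  · -- nonnegativity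
    intro l j h1 h2 h3 h4
    have hba : C (l-1) ≤ C l := Cmono (l-1) l (by omega) h2
    have hxy : S (j-1) ≤ S j := Smono (j-1) j (by omega) (by omega)
    have := min_mono_sub (a := C l) (b := C (l-1)) hba hxy
    dsimp only
    linarith
  · -- row sums: each source fully served
    intro j h1 h2
    set L := min (j + d - 1) K with hL
    have hjL : j ≤ L := by omega
    have hLK : L ≤ K := by omega
    have key : ∀ l ∈ Finset.Icc j L,
        (min (C l) (S j) - min (C (l-1)) (S j)) -
          (min (C l) (S (j-1)) - min (C (l-1)) (S (j-1)))
        = (fun l => min (C l) (S j) - min (C l) (S (j-1))) l -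
          (fun l => min (C l) (S j) - min (C l) (S (j-1))) (l-1) := by
      intro l _
      simp only
      ring
    rw [Finset.sum_congr rfl key,
      tele_aux (fun l => min (C l) (S j) - min (C l) (S (j-1))) j L hjL]
    have e1 : S j ≤ C L := SC j h1 h2
    have e2 : S (j-1) ≤ C L := le_trans (Smono (j-1) j (by omega) h2) e1
    have e3 : C (j-1) ≤ S (j-1) := CS (j-1) (by omega)
    have e4 : C (j-1) ≤ S j := le_trans e3 (Smono (j-1) j (by omega) h2)
    rw [min_eq_right e1, min_eq_right e2, min_eq_left e4, min_eq_left e3]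
    have := Sstep j h1
    linarith
  · -- column sums: each slot's capacity fully used
    intro l h1 h2
    set m := max 1 (l + 1 - d) with hm
    have hm1 : 1 ≤ m := le_max_left 1 _
    have hml : m ≤ l := by omega
    rw [tele_aux (fun j => min (C l) (S j) - min (C (l-1)) (S j)) m l hml]
    have e1 : C l ≤ S l := CS l h2
    have e2 : C (l-1) ≤ S l := le_trans (Cmono (l-1) l (by omega) h2) e1
    have e3 : S (m-1) ≤ C (l-1) := window l h1 h2
    have e4 : S (m-1) ≤ C l := le_trans e3 (Cmono (l-1) l (by omega) h2)
    rw [min_eq_left e1, min_eq_left e2, min_eq_right e4, min_eq_right e3]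
    have := Cstep l h1
    linarith
end

section
/- Let K ≥ 1, d ≥ 1, σ² > 0, ρ ∈ [0,1), let h_1,…,h_K be nonzero real channel gains, and let E_1,…,E_K ≥ 0 with E_1 > 0. Consider the delay-tolerant problem (38): minimize f(r) = (σ²/K) Σ_{i=1}^{K} ( (1−ρ) Σ_{j=2}^{i} ρ^{i−j} e^{−r_{ij}} + ρ^{i−1} e^{−r_{i1}} ) over (p, r) subject to r_{ij} = Σ_{k=j}^{i} r_{kk} for 1 ≤ j < i ≤ K, r_{ij} ≤ Σ_{k=j}^{min(i+d−1,K)} log(1+|h_k|² p_k) for 1 ≤ j ≤ i ≤ K, Σ_{j=1}^{i} p_j ≤ Σ_{j=1}^{i} E_j for all i, p_i ≥ 0 and r_{ij} ≥ 0. Then every global minimizer (p*, r*) satisfies the sum-capacity tightness Σ_{i=1}^{K} r*_{ii} = Σ_{i=1}^{K} log(1 + |h_i|² p*_i). (Claim used in the converse part of the proof of Proposition 1: since the objective is nonincreasing in every r_{ij}, the optimal solution exhausts the total channel capacity.) -/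
open Finset Real

/-- Feasibility for the delay-tolerant problem (38). -/
def FeasibleDT (K d : ℕ) (h E : ℕ → ℝ) (p : ℕ → ℝ) (r : ℕ → ℕ → ℝ) : Prop :=
  (∀ i j, 1 ≤ j → j < i → i ≤ K → r i j = ∑ k ∈ Finset.Icc j i, r k k) ∧
  (∀ i j, 1 ≤ j → j ≤ i → i ≤ K →
    r i j ≤ ∑ k ∈ Finset.Icc j (min (i + d - 1) K), Real.log (1 + (h k) ^ 2 * p k)) ∧
  (∀ i, 1 ≤ i → i ≤ K →
    ∑ j ∈ Finset.Icc 1 i, p j ≤ ∑ j ∈ Finset.Icc 1 i, E j) ∧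
  (∀ i, 1 ≤ i → i ≤ K → 0 ≤ p i) ∧
  (∀ i j, 1 ≤ j → j ≤ i → i ≤ K → 0 ≤ r i j)

/-- The average-distortion objective of problem (38). -/
noncomputable def avgDistDT (K : ℕ) (σ2 ρ : ℝ) (r : ℕ → ℕ → ℝ) : ℝ :=
  (σ2 / K) * ∑ i ∈ Finset.Icc 1 K,
    ((1 - ρ) * ∑ j ∈ Finset.Icc 2 i, ρ ^ (i - j) * Real.exp (-r i j)
      + ρ ^ (i - 1) * Real.exp (-r i 1))

private lemma sum_split (f : ℕ → ℝ) {j n k : ℕ} (h1 : 1 ≤ j) (h2 : j ≤ n + 1) (h3 : n ≤ k) :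
    (∑ x ∈ Finset.Icc j n, f x) + ∑ x ∈ Finset.Icc (n+1) k, f x = ∑ x ∈ Finset.Icc j k, f x := by
  have e1 : Finset.Icc j n = Finset.Ioc (j-1) n := by
    rw [← Finset.Icc_add_one_left_eq_Ioc]; congr 1; omega
  have e2 : Finset.Icc (n+1) k = Finset.Ioc n k := Finset.Icc_add_one_left_eq_Ioc n k
  have e3 : Finset.Icc j k = Finset.Ioc (j-1) k := by
    rw [← Finset.Icc_add_one_left_eq_Ioc]; congr 1; omega
  rw [e1, e2, e3]
  exact Finset.sum_Ioc_consecutive f (by omega) h3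

private lemma key_cover (K : ℕ) (hK : 1 ≤ K) (a c : ℕ → ℝ) (m : ℕ → ℕ)
    (hm1 : ∀ i, 1 ≤ i → i ≤ K → i ≤ m i ∧ m i ≤ K)
    (hmmono : ∀ i i', i ≤ i' → m i ≤ m i')
    (hc0 : ∀ k, 1 ≤ k → k ≤ K → 0 ≤ c k)
    (hA : ∀ i j, 1 ≤ j → j ≤ i → i ≤ K →
      ∑ k ∈ Finset.Icc j i, a k ≤ ∑ k ∈ Finset.Icc j (m i), c k)
    (hall : ∀ t, 1 ≤ t → t ≤ K → ∃ i j, 1 ≤ j ∧ j ≤ t ∧ t ≤ i ∧ i ≤ K ∧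
      ∑ k ∈ Finset.Icc j (m i), c k ≤ ∑ k ∈ Finset.Icc j i, a k) :
    ∑ k ∈ Finset.Icc 1 (m K), c k ≤ ∑ k ∈ Finset.Icc 1 K, a k := by
  have main : ∀ t, 1 ≤ t → t ≤ K → ∃ i, t ≤ i ∧ i ≤ K ∧
      ∑ k ∈ Finset.Icc 1 (m i), c k ≤ ∑ k ∈ Finset.Icc 1 i, a k := by
    intro t
    induction t using Nat.strong_induction_on with
    | _ t ih =>
      intro ht1 htK
      obtain ⟨i, j, hj1, hjt, hti, hiK, htight⟩ := hall t ht1 htK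
      by_cases hj : j = 1
      · subst hj; exact ⟨i, hti, hiK, htight⟩
      · have hj2 : 2 ≤ j := by omega
        obtain ⟨i', hi'1, hi'K, hIH⟩ := ih (j-1) (by omega) (by omega) (by omega)
        by_cases hii : i ≤ i'
        · exact ⟨i', le_trans hti hii, hi'K, hIH⟩
        · have hi'i : i' < i := by omega
          have hmm : m i' ≤ m i := hmmono i' i (by omega)
          have hii' : i' ≤ m i' := (hm1 i' (by omega) hi'K).1
          have hmi'K : m i' ≤ K := (hm1 i' (by omega) hi'K).2
          have himi : i ≤ m i := (hm1 i (by omega) hiK).1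
          have h3 : ∑ k ∈ Finset.Icc j i', a k ≤ ∑ k ∈ Finset.Icc j (m i'), c k := by
            by_cases hji' : j ≤ i'
            · exact hA i' j (by omega) hji' hi'K
            · have he : Finset.Icc j i' = ∅ := by
                rw [Finset.Icc_eq_empty_iff]; omega
              rw [he, Finset.sum_empty]
              refine Finset.sum_nonneg fun k hk => ?_
              have hk' := Finset.mem_Icc.mp hk
              exact hc0 k (by omega) (by omega)
          have s1 : (∑ x ∈ Finset.Icc 1 i', a x) + ∑ x ∈ Finset.Icc (i'+1) i, a x
              = ∑ x ∈ Finset.Icc 1 i, a x := sum_split a le_rfl (by omega) (by omega)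
          have s2 : (∑ x ∈ Finset.Icc j i', a x) + ∑ x ∈ Finset.Icc (i'+1) i, a x
              = ∑ x ∈ Finset.Icc j i, a x := sum_split a (by omega) (by omega) (by omega)
          have s4 : (∑ x ∈ Finset.Icc 1 (j-1), c x) + ∑ x ∈ Finset.Icc j (m i'), c x
              = ∑ x ∈ Finset.Icc 1 (m i'), c x := by
            have := sum_split c (le_refl 1) (show 1 ≤ (j-1)+1 by omega) (show j-1 ≤ m i' by omega)
            rwa [show j - 1 + 1 = j by omega] at this
          have s5 : (∑ x ∈ Finset.Icc 1 (j-1), c x) + ∑ x ∈ Finset.Icc j (m i), c x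
              = ∑ x ∈ Finset.Icc 1 (m i), c x := by
            have := sum_split c (le_refl 1) (show 1 ≤ (j-1)+1 by omega) (show j-1 ≤ m i by omega)
            rwa [show j - 1 + 1 = j by omega] at this
          exact ⟨i, hti, hiK, by linarith⟩
  obtain ⟨i, hKi, hiK, hfin⟩ := main K hK le_rfl
  have : i = K := le_antisymm hiK hKi
  subst this
  exact hfin


/-- Every global minimizer of the delay-tolerant problem (38) exhausts the total
channel capacity: Σᵢ r*_{ii} = Σᵢ log(1 + |hᵢ|² p*ᵢ). -/
theorem stmt_16 (K d : ℕ) (hK : 1 ≤ K) (hd : 1 ≤ d)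
    (σ2 ρ : ℝ) (hσ : 0 < σ2) (hρ0 : 0 ≤ ρ) (hρ1 : ρ < 1)
    (h : ℕ → ℝ) (hh : ∀ i, 1 ≤ i → i ≤ K → h i ≠ 0)
    (E : ℕ → ℝ) (hE : ∀ i, 1 ≤ i → i ≤ K → 0 ≤ E i) (hE1 : 0 < E 1)
    (pstar : ℕ → ℝ) (rstar : ℕ → ℕ → ℝ)
    (hfeas : FeasibleDT K d h E pstar rstar)
    (hmin : ∀ (p : ℕ → ℝ) (r : ℕ → ℕ → ℝ), FeasibleDT K d h E p r →
      avgDistDT K σ2 ρ rstar ≤ avgDistDT K σ2 ρ r) :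
    ∑ i ∈ Finset.Icc 1 K, rstar i i
      = ∑ i ∈ Finset.Icc 1 K, Real.log (1 + (h i) ^ 2 * pstar i) := by
  obtain ⟨heq, hcap, hpow, hppos, hrnn⟩ := hfeas
  set c : ℕ → ℝ := fun k => Real.log (1 + (h k) ^ 2 * pstar k) with hcdef
  show ∑ i ∈ Finset.Icc 1 K, rstar i i = ∑ i ∈ Finset.Icc 1 K, c i
  have hc0 : ∀ k, 1 ≤ k → k ≤ K → 0 ≤ c k := by
    intro k h1 h2
    have hp := hppos k h1 h2
    have h1' : (1:ℝ) ≤ 1 + (h k) ^ 2 * pstar k := by nlinarith [sq_nonneg (h k)]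
    exact Real.log_nonneg h1'
  have hrs : ∀ i j, 1 ≤ j → j ≤ i → i ≤ K →
      rstar i j = ∑ k ∈ Finset.Icc j i, rstar k k := by
    intro i j h1 h2 h3
    rcases eq_or_lt_of_le h2 with rfl | hlt
    · rw [Finset.Icc_self, Finset.sum_singleton]
    · exact heq i j h1 hlt h3
  have hA : ∀ i j, 1 ≤ j → j ≤ i → i ≤ K →
      ∑ k ∈ Finset.Icc j i, rstar k k ≤ ∑ k ∈ Finset.Icc j (min (i+d-1) K), c k := by
    intro i j h1 h2 h3
    rw [← hrs i j h1 h2 h3]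
    exact hcap i j h1 h2 h3
  have hmK : min (K + d - 1) K = K := by omega
  have hle : ∑ i ∈ Finset.Icc 1 K, rstar i i ≤ ∑ i ∈ Finset.Icc 1 K, c i := by
    have := hA K 1 le_rfl hK le_rfl
    rwa [hmK] at this
  by_contra hne
  have hlt : ∑ i ∈ Finset.Icc 1 K, rstar i i < ∑ i ∈ Finset.Icc 1 K, c i :=
    lt_of_le_of_ne hle hne
  -- find a slot t all of whose covering constraints are slack
  have hexist : ∃ t, 1 ≤ t ∧ t ≤ K ∧ ∀ i j, 1 ≤ j → j ≤ t → t ≤ i → i ≤ K →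
      ∑ k ∈ Finset.Icc j i, rstar k k < ∑ k ∈ Finset.Icc j (min (i+d-1) K), c k := by
    by_contra hno
    push_neg at hno
    have hall : ∀ t, 1 ≤ t → t ≤ K → ∃ i j, 1 ≤ j ∧ j ≤ t ∧ t ≤ i ∧ i ≤ K ∧
        ∑ k ∈ Finset.Icc j (min (i+d-1) K), c k ≤ ∑ k ∈ Finset.Icc j i, rstar k k := by
      intro t h1 h2
      obtain ⟨i, j, hj1, hjt, hti, hiK, hge⟩ := hno t h1 h2
      exact ⟨i, j, hj1, hjt, hti, hiK, hge⟩
    have hkey : ∑ k ∈ Finset.Icc 1 (min (K+d-1) K), c k ≤ ∑ k ∈ Finset.Icc 1 K, rstar k k :=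
      key_cover K hK (fun k => rstar k k) c (fun i => min (i+d-1) K)
        (fun i h1 h2 => by
          show i ≤ min (i+d-1) K ∧ min (i+d-1) K ≤ K
          omega)
        (fun i i' hii => by
          show min (i+d-1) K ≤ min (i'+d-1) K
          omega) hc0 hA hall
    rw [hmK] at hkey
    linarith
  obtain ⟨t, ht1, htK, hstrict⟩ := hexist
  -- the minimal slack over covering constraints
  set S : Finset (ℕ × ℕ) :=
    ((Finset.Icc 1 K) ×ˢ (Finset.Icc 1 K)).filter (fun q => q.2 ≤ t ∧ t ≤ q.1) with hS
  have hSmem : ∀ i j, 1 ≤ j → j ≤ t → t ≤ i → i ≤ K → (i, j) ∈ S := by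
    intro i j h1 h2 h3 h4
    rw [hS, Finset.mem_filter, Finset.mem_product, Finset.mem_Icc, Finset.mem_Icc]
    exact ⟨⟨⟨by omega, by omega⟩, ⟨h1, by omega⟩⟩, h2, h3⟩
  have hSne : S.Nonempty := ⟨(t, t), hSmem t t ht1 le_rfl le_rfl htK⟩
  set ε : ℝ := S.inf' hSne
    (fun q => (∑ k ∈ Finset.Icc q.2 (min (q.1+d-1) K), c k) - ∑ k ∈ Finset.Icc q.2 q.1, rstar k k)
    with hε
  have hε0 : 0 < ε := by
    rw [hε, Finset.lt_inf'_iff]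
    intro q hq
    rw [hS, Finset.mem_filter, Finset.mem_product, Finset.mem_Icc, Finset.mem_Icc] at hq
    have := hstrict q.1 q.2 hq.1.2.1 hq.2.1 hq.2.2 hq.1.1.2
    linarith
  have hεle : ∀ i j, 1 ≤ j → j ≤ t → t ≤ i → i ≤ K →
      ε ≤ (∑ k ∈ Finset.Icc j (min (i+d-1) K), c k) - ∑ k ∈ Finset.Icc j i, rstar k k := by
    intro i j h1 h2 h3 h4
    exact Finset.inf'_le _ (hSmem i j h1 h2 h3 h4)
  -- perturbed rate allocation
  set r' : ℕ → ℕ → ℝ :=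
    fun i j => (∑ k ∈ Finset.Icc j i, rstar k k) + (if j ≤ t ∧ t ≤ i then ε else 0) with hr'
  have hr'val : ∀ i j, r' i j
      = (∑ k ∈ Finset.Icc j i, rstar k k) + (if j ≤ t ∧ t ≤ i then ε else 0) := fun i j => rfl
  have hge : ∀ i j, 1 ≤ j → j ≤ i → i ≤ K → rstar i j ≤ r' i j := by
    intro i j h1 h2 h3
    rw [hr'val, ← hrs i j h1 h2 h3]
    have : (0:ℝ) ≤ if j ≤ t ∧ t ≤ i then ε else 0 := by
      split <;> [linarith; exact le_rfl]
    linarith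
  have hdiag : ∀ k, r' k k = rstar k k + (if k = t then ε else 0) := by
    intro k
    rw [hr'val, Finset.Icc_self, Finset.sum_singleton]
    congr 1
    by_cases hk : k = t
    · subst hk; simp
    · rw [if_neg hk, if_neg (fun hc => hk (le_antisymm hc.1 hc.2))]
  have hfeas' : FeasibleDT K d h E pstar r' := by
    refine ⟨?_, ?_, hpow, hppos, ?_⟩
    · intro i j hj1 hji hiK
      rw [hr'val]
      have : ∑ k ∈ Finset.Icc j i, r' k k
          = (∑ k ∈ Finset.Icc j i, rstar k k)
            + ∑ k ∈ Finset.Icc j i, (if k = t then ε else 0) := by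
        rw [← Finset.sum_add_distrib]
        exact Finset.sum_congr rfl (fun k _ => hdiag k)
      rw [this, Finset.sum_ite_eq' (Finset.Icc j i) t (fun _ => ε)]
      congr 1
      simp [Finset.mem_Icc]
    · intro i j hj1 hji hiK
      show r' i j ≤ ∑ k ∈ Finset.Icc j (min (i + d - 1) K), c k
      rw [hr'val]
      by_cases hcond : j ≤ t ∧ t ≤ i
      · rw [if_pos hcond]
        have := hεle i j hj1 hcond.1 hcond.2 hiK
        linarith
      · rw [if_neg hcond]
        have := hA i j hj1 hji hiK
        linarith
    · intro i j hj1 hji hiK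
      rw [hr'val]
      have h1 : 0 ≤ ∑ k ∈ Finset.Icc j i, rstar k k := by
        refine Finset.sum_nonneg fun k hk => ?_
        have hk' := Finset.mem_Icc.mp hk
        exact hrnn k k (by omega) le_rfl (by omega)
      have h2 : (0:ℝ) ≤ if j ≤ t ∧ t ≤ i then ε else 0 := by
        split <;> [linarith; exact le_rfl]
      linarith
  -- strictly smaller objective
  have hρ1' : (0:ℝ) < 1 - ρ := by linarith
  have hobj : avgDistDT K σ2 ρ r' < avgDistDT K σ2 ρ rstar := by
    unfold avgDistDT
    have hKpos : (0:ℝ) < (K:ℝ) := by exact_mod_cast Nat.lt_of_lt_of_le Nat.zero_lt_one hK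
    refine mul_lt_mul_of_pos_left ?_ (div_pos hσ hKpos)
    refine Finset.sum_lt_sum ?_ ⟨t, Finset.mem_Icc.mpr ⟨ht1, htK⟩, ?_⟩
    · intro i hi
      have hi' := Finset.mem_Icc.mp hi
      have hsum : ∑ j ∈ Finset.Icc 2 i, ρ ^ (i - j) * Real.exp (-r' i j)
          ≤ ∑ j ∈ Finset.Icc 2 i, ρ ^ (i - j) * Real.exp (-rstar i j) := by
        refine Finset.sum_le_sum fun j hj => ?_
        have hj' := Finset.mem_Icc.mp hj
        exact mul_le_mul_of_nonneg_left
          (Real.exp_le_exp.mpr (neg_le_neg (hge i j (by omega) hj'.2 hi'.2)))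
          (pow_nonneg hρ0 _)
      have h2 : Real.exp (-r' i 1) ≤ Real.exp (-rstar i 1) :=
        Real.exp_le_exp.mpr (neg_le_neg (hge i 1 le_rfl hi'.1 hi'.2))
      have := mul_le_mul_of_nonneg_left hsum (le_of_lt hρ1')
      have := mul_le_mul_of_nonneg_left h2 (pow_nonneg hρ0 (i-1))
      linarith
    · -- strict at i = t
      have hdt : rstar t t < r' t t := by
        rw [hdiag t, if_pos rfl]; linarith
      by_cases ht2 : 2 ≤ t
      · have hsum : ∑ j ∈ Finset.Icc 2 t, ρ ^ (t - j) * Real.exp (-r' t j)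
            < ∑ j ∈ Finset.Icc 2 t, ρ ^ (t - j) * Real.exp (-rstar t j) := by
          refine Finset.sum_lt_sum ?_ ⟨t, Finset.mem_Icc.mpr ⟨ht2, le_rfl⟩, ?_⟩
          · intro j hj
            have hj' := Finset.mem_Icc.mp hj
            exact mul_le_mul_of_nonneg_left
              (Real.exp_le_exp.mpr (neg_le_neg (hge t j (by omega) hj'.2 htK)))
              (pow_nonneg hρ0 _)
          · have : (t : ℕ) - t = 0 := by omega
            rw [this, pow_zero, one_mul, one_mul]
            exact Real.exp_lt_exp.mpr (neg_lt_neg hdt)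
        have h2 : Real.exp (-r' t 1) ≤ Real.exp (-rstar t 1) :=
          Real.exp_le_exp.mpr (neg_le_neg (hge t 1 le_rfl (by omega) htK))
        have hs := mul_lt_mul_of_pos_left hsum hρ1'
        have h2' := mul_le_mul_of_nonneg_left h2 (pow_nonneg hρ0 (t-1))
        linarith
      · have ht1' : t = 1 := by omega
        subst ht1'
        have he : Finset.Icc 2 1 = (∅ : Finset ℕ) := by
          rw [Finset.Icc_eq_empty_iff]; omega
        rw [he, Finset.sum_empty, Finset.sum_empty]
        have : Real.exp (-r' 1 1) < Real.exp (-rstar 1 1) :=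
          Real.exp_lt_exp.mpr (neg_lt_neg hdt)
        simp only [Nat.sub_self, pow_zero, one_mul]
        linarith
  have := hmin pstar r' hfeas'
  linarith
end
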